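/- Let X be a compact metric space. If f : P(X) → ℝ is such that there exist, for every ε > 0, a constant B ≥ 0 and sequences f_M (symmetric continuous functions on X^M) and f̂_M ∈ H_{k_M} with: f_M → f in mean field, ‖f_M − f̂_M‖_∞ ≤ ε for all M, and ‖f̂_M‖_{k_M} ≤ B for all M — then for every ε > 0 there exists f̂ ∈ H_k with ‖f − f̂‖_∞ ≤ ε, where H_k is the RKHS of the mean field limit kernel k. -/

import Mathlib

open MeasureTheory Filter
open scoped ENNReal RealInnerProductSpace

/-- Kantorovich–Rubinstein metric: `d_KR(μ,ν) = sup{∫φ dμ − ∫φ dν : φ 1-Lipschitz}`. -/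
noncomputable def dKR {X : Type*} [MeasurableSpace X] [MetricSpace X] (μ ν : Measure X) : ℝ :=
  ⨆ φ : {f : X → ℝ // LipschitzWith 1 f}, (∫ x, φ.1 x ∂μ - ∫ x, φ.1 x ∂ν)

/-- The empirical measure `(1/M) ∑ᵢ δ_{xᵢ}` of a tuple `x ∈ X^M`. -/
noncomputable def empMeasure {X : Type*} [MeasurableSpace X] {M : ℕ} (x : Fin M → X) : Measure X :=
  ((M : ℝ≥0∞)⁻¹) • ∑ i, Measure.dirac (x i)

theorem empMeasure_prob {X : Type*} [MeasurableSpace X] {M : ℕ} (x : Fin (M + 1) → X) :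
    IsProbabilityMeasure (empMeasure x) := by
  constructor
  simp only [empMeasure, Measure.smul_apply, smul_eq_mul]
  rw [Measure.coe_finset_sum]
  simp only [Finset.sum_apply, measure_univ, Finset.sum_const, Finset.card_univ,
    Fintype.card_fin, nsmul_eq_mul, mul_one]
  exact ENNReal.inv_mul_cancel (by exact_mod_cast Nat.succ_ne_zero M) (by simp)

/-- The empirical measure of a (nonempty) tuple, as a probability measure. -/
noncomputable def empProb {X : Type*} [MeasurableSpace X] {M : ℕ} (x : Fin (M + 1) → X) :
    ProbabilityMeasure X :=
  ⟨empMeasure x, empMeasure_prob x⟩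

open scoped NNReal Topology
set_option linter.unusedSectionVars false
set_option maxHeartbeats 1000000

section aux
variable {X : Type*} [MetricSpace X] [CompactSpace X] [Nonempty X]
  [MeasurableSpace X] [BorelSpace X]

lemma integrable_cont {φ : X → ℝ} (hφ : Continuous φ) (μ : Measure X) [IsFiniteMeasure μ] :
    Integrable φ μ :=
  hφ.integrable_of_hasCompactSupport
    (IsCompact.of_isClosed_subset isCompact_univ (isClosed_tsupport φ) (Set.subset_univ _))

lemma lip_abs_bound {φ : X → ℝ} (hφ : LipschitzWith 1 φ) (x0 x : X) :
    |φ x - φ x0| ≤ Metric.diam (Set.univ : Set X) := by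
  have h := hφ.dist_le_mul x x0
  rw [Real.dist_eq] at h
  refine h.trans ?_
  simpa using Metric.dist_le_diam_of_mem (isCompact_univ.isBounded) (Set.mem_univ x)
    (Set.mem_univ x0)

lemma dKR_bddAbove (μ ν : Measure X) [IsProbabilityMeasure μ] [IsProbabilityMeasure ν] :
    BddAbove (Set.range fun φ : {f : X → ℝ // LipschitzWith 1 f} =>
      ∫ x, φ.1 x ∂μ - ∫ x, φ.1 x ∂ν) := by
  set D := Metric.diam (Set.univ : Set X)
  obtain ⟨x0⟩ : Nonempty X := inferInstance
  refine ⟨2 * D, ?_⟩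
  rintro r ⟨⟨φ, hφ⟩, rfl⟩
  have hint : ∀ (κ : Measure X) [IsProbabilityMeasure κ],
      ∫ x, φ x ∂κ - φ x0 = ∫ x, (φ x - φ x0) ∂κ := by
    intro κ hκ
    rw [integral_sub (integrable_cont hφ.continuous κ) (integrable_const _), integral_const]
    simp
  have habs : ∀ (κ : Measure X) [IsProbabilityMeasure κ], |∫ x, (φ x - φ x0) ∂κ| ≤ D := by
    intro κ hκ
    have := norm_integral_le_of_norm_le_const (μ := κ) (f := fun x => φ x - φ x0) (C := D)
      (Eventually.of_forall fun x => by simpa [Real.norm_eq_abs] using lip_abs_bound hφ x0 x)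
    simpa [Real.norm_eq_abs] using this
  have : ∫ x, φ x ∂μ - ∫ x, φ x ∂ν
      = (∫ x, (φ x - φ x0) ∂μ) - (∫ x, (φ x - φ x0) ∂ν) := by
    rw [← hint μ, ← hint ν]; ring
  simp only [] 
  show ∫ x, φ x ∂μ - ∫ x, φ x ∂ν ≤ 2 * D
  rw [this]
  have h1 := habs μ; have h2 := habs ν
  have := abs_sub (∫ x, (φ x - φ x0) ∂μ) (∫ x, (φ x - φ x0) ∂ν)
  nlinarith [abs_nonneg (∫ x, (φ x - φ x0) ∂μ), le_abs_self ((∫ x, (φ x - φ x0) ∂μ) - (∫ x, (φ x - φ x0) ∂ν))]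

lemma le_dKR (μ ν : Measure X) [IsProbabilityMeasure μ] [IsProbabilityMeasure ν]
    {φ : X → ℝ} (hφ : LipschitzWith 1 φ) :
    ∫ x, φ x ∂μ - ∫ x, φ x ∂ν ≤ dKR μ ν :=
  le_ciSup (dKR_bddAbove μ ν) ⟨φ, hφ⟩

lemma dKR_nonneg (μ ν : Measure X) [IsProbabilityMeasure μ] [IsProbabilityMeasure ν] :
    0 ≤ dKR μ ν := by
  have := le_dKR μ ν (φ := fun _ => (0:ℝ)) ((LipschitzWith.const 0).weaken (zero_le_one))
  simpa using this

lemma abs_diff_le_dKR (μ ν : Measure X) [IsProbabilityMeasure μ] [IsProbabilityMeasure ν]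
    {φ : X → ℝ} (hφ : LipschitzWith 1 φ) :
    |∫ x, φ x ∂μ - ∫ x, φ x ∂ν| ≤ dKR μ ν := by
  rw [abs_le]
  constructor
  · have := le_dKR μ ν (φ := fun x => -φ x) (by exact fun x y => by simpa [edist_comm] using hφ.neg x y)
    have hμ : ∫ x, -φ x ∂μ = -∫ x, φ x ∂μ := integral_neg _
    have hν : ∫ x, -φ x ∂ν = -∫ x, φ x ∂ν := integral_neg _
    rw [hμ, hν] at this
    linarith
  · exact le_dKR μ ν hφ

lemma dKR_le {μ ν : Measure X} {r : ℝ}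
    (h : ∀ φ : X → ℝ, LipschitzWith 1 φ → ∫ x, φ x ∂μ - ∫ x, φ x ∂ν ≤ r) :
    dKR μ ν ≤ r :=
  haveI : Nonempty {f : X → ℝ // LipschitzWith 1 f} :=
    ⟨⟨fun _ => 0, (LipschitzWith.const 0).weaken zero_le_one⟩⟩
  ciSup_le fun φ => h φ.1 φ.2

end aux

section sw
variable {X : Type*} [MetricSpace X] [CompactSpace X] [Nonempty X]

noncomputable def lipAlg (X : Type*) [MetricSpace X] [CompactSpace X] : Subalgebra ℝ C(X, ℝ) where
  carrier := {f | ∃ K : ℝ≥0, LipschitzWith K (f : X → ℝ)}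
  mul_mem' := by
    rintro f g ⟨Kf, hf⟩ ⟨Kg, hg⟩
    refine ⟨‖f‖₊ * Kg + ‖g‖₊ * Kf, LipschitzWith.of_dist_le_mul fun x y => ?_⟩
    have h1 : dist ((f * g) x) ((f * g) y) ≤ |f x| * dist (g x) (g y) + |g y| * dist (f x) (f y) := by
      simp only [ContinuousMap.mul_apply, Real.dist_eq]
      have : f x * g x - f y * g y = f x * (g x - g y) + g y * (f x - f y) := by ring
      rw [this]
      refine (abs_add_le _ _).trans ?_
      simp [abs_mul]
    refine h1.trans ?_
    have hfx : |f x| ≤ ‖f‖ := by simpa [Real.norm_eq_abs] using f.norm_coe_le_norm x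
    have hgy : |g y| ≤ ‖g‖ := by simpa [Real.norm_eq_abs] using g.norm_coe_le_norm y
    have h2 : dist (g x) (g y) ≤ Kg * dist x y := hg.dist_le_mul x y
    have h3 : dist (f x) (f y) ≤ Kf * dist x y := hf.dist_le_mul x y
    have hc : ((‖f‖₊ * Kg + ‖g‖₊ * Kf : ℝ≥0) : ℝ) = ‖f‖ * Kg + ‖g‖ * Kf := by push_cast; ring
    rw [hc]
    have := dist_nonneg (x := x) (y := y)
    nlinarith [abs_nonneg (f x), abs_nonneg (g y), dist_nonneg (x := g x) (y := g y),
      dist_nonneg (x := f x) (y := f y), norm_nonneg f, norm_nonneg g, NNReal.coe_nonneg Kf, NNReal.coe_nonneg Kg]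
  add_mem' := by
    rintro f g ⟨Kf, hf⟩ ⟨Kg, hg⟩
    exact ⟨Kf + Kg, by rw [ContinuousMap.coe_add]; exact hf.add hg⟩
  algebraMap_mem' := fun r => ⟨0, by
    rw [show ((algebraMap ℝ C(X,ℝ) r : C(X,ℝ)) : X → ℝ) = fun _ => r from rfl]
    exact LipschitzWith.const r⟩

lemma lipAlg_dense (φ : C(X, ℝ)) {η : ℝ} (hη : 0 < η) :
    ∃ (ψ : X → ℝ) (K : ℝ≥0), LipschitzWith K ψ ∧ ∀ x, |φ x - ψ x| ≤ η := by
  have hsep : (lipAlg X).SeparatesPoints := by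
    intro x y hxy
    refine ⟨(fun z => dist z x), ⟨⟨fun z => dist z x, (LipschitzWith.dist_left x).continuous⟩,
      ⟨1, LipschitzWith.dist_left x⟩, rfl⟩, ?_⟩
    simp only []
    rw [dist_self]
    exact fun h => hxy (dist_eq_zero.mp h.symm).symm
  have hcl := ContinuousMap.subalgebra_topologicalClosure_eq_top_of_separatesPoints _ hsep
  have hφ : φ ∈ (lipAlg X).topologicalClosure := by rw [hcl]; trivial
  have hφ' : φ ∈ closure ((lipAlg X : Set C(X, ℝ))) := by
    rw [← Subalgebra.topologicalClosure_coe]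
    exact hφ
  rw [Metric.mem_closure_iff] at hφ'
  obtain ⟨g, hg, hdist⟩ := hφ' η hη
  obtain ⟨K, hK⟩ := hg
  exact ⟨g, K, hK, fun x => by
    have := ContinuousMap.dist_apply_le_dist (f := φ) (g := g) x
    rw [Real.dist_eq] at this
    exact this.trans hdist.le⟩

variable [MeasurableSpace X] [BorelSpace X]



lemma tendsto_of_dKR {ι : Type*} {l : Filter ι} (ν : ι → ProbabilityMeasure X)
    (μ : ProbabilityMeasure X)
    (h : Tendsto (fun i => dKR (ν i : Measure X) (μ : Measure X)) l (𝓝 0)) :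
    Tendsto ν l (𝓝 μ) := by
  rw [ProbabilityMeasure.tendsto_iff_forall_integral_tendsto]
  intro φ
  rw [Metric.tendsto_nhds]
  intro η hη
  obtain ⟨ψ, K, hK, hψ⟩ := lipAlg_dense φ.toContinuousMap (show (0:ℝ) < η/4 by linarith)
  have hc : (0:ℝ) < (K:ℝ) + 1 := by positivity
  have hχ : LipschitzWith 1 (fun x => ((K:ℝ)+1)⁻¹ * ψ x) := by
    refine LipschitzWith.of_dist_le_mul fun x y => ?_
    have h1 := hK.dist_le_mul x y
    rw [Real.dist_eq] at h1 ⊢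
    have h2 : |ψ x - ψ y| ≤ ((K:ℝ)+1) * dist x y := by
      refine h1.trans ?_
      have := dist_nonneg (x := x) (y := y)
      nlinarith
    have : ((K:ℝ)+1)⁻¹ * ψ x - ((K:ℝ)+1)⁻¹ * ψ y = ((K:ℝ)+1)⁻¹ * (ψ x - ψ y) := by ring
    rw [this, abs_mul, abs_of_pos (by positivity : (0:ℝ) < ((K:ℝ)+1)⁻¹)]
    calc ((K:ℝ)+1)⁻¹ * |ψ x - ψ y| ≤ ((K:ℝ)+1)⁻¹ * (((K:ℝ)+1) * dist x y) := by
          exact mul_le_mul_of_nonneg_left h2 (by positivity)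
      _ = 1 * dist x y := by field_simp
  have key : ∀ (κ : Measure X) [IsProbabilityMeasure κ],
      |∫ x, φ x ∂κ - ∫ x, ψ x ∂κ| ≤ η/4 := by
    intro κ hκ
    have hint : ∫ x, φ x ∂κ - ∫ x, ψ x ∂κ = ∫ x, (φ x - ψ x) ∂κ := by
      rw [integral_sub (integrable_cont φ.continuous κ) (integrable_cont hK.continuous κ)]
    rw [hint]
    have := norm_integral_le_of_norm_le_const (μ := κ) (f := fun x => φ x - ψ x) (C := η/4)
      (Eventually.of_forall fun x => by simpa [Real.norm_eq_abs] using hψ x)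
    simpa [Real.norm_eq_abs] using this
  have hmid : ∀ i, |∫ x, ψ x ∂(ν i : Measure X) - ∫ x, ψ x ∂(μ : Measure X)|
      ≤ ((K:ℝ)+1) * dKR (ν i : Measure X) (μ : Measure X) := by
    intro i
    have habs := abs_diff_le_dKR (ν i : Measure X) (μ : Measure X) hχ
    have e1 : ∫ x, ((K:ℝ)+1)⁻¹ * ψ x ∂(ν i : Measure X)
        = ((K:ℝ)+1)⁻¹ * ∫ x, ψ x ∂(ν i : Measure X) := integral_const_mul _ _
    have e2 : ∫ x, ((K:ℝ)+1)⁻¹ * ψ x ∂(μ : Measure X)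
        = ((K:ℝ)+1)⁻¹ * ∫ x, ψ x ∂(μ : Measure X) := integral_const_mul _ _
    rw [e1, e2] at habs
    have : |((K:ℝ)+1)⁻¹ * (∫ x, ψ x ∂(ν i : Measure X) - ∫ x, ψ x ∂(μ : Measure X))|
        ≤ dKR (ν i : Measure X) (μ : Measure X) := by
      rw [mul_sub]; exact habs
    rw [abs_mul, abs_of_pos (by positivity : (0:ℝ) < ((K:ℝ)+1)⁻¹)] at this
    calc |∫ x, ψ x ∂(ν i : Measure X) - ∫ x, ψ x ∂(μ : Measure X)|
        = ((K:ℝ)+1) * (((K:ℝ)+1)⁻¹ * |∫ x, ψ x ∂(ν i : Measure X) - ∫ x, ψ x ∂(μ : Measure X)|) := by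
          field_simp
      _ ≤ ((K:ℝ)+1) * dKR (ν i : Measure X) (μ : Measure X) :=
          mul_le_mul_of_nonneg_left this (by positivity)
  have hev : ∀ᶠ i in l, ((K:ℝ)+1) * dKR (ν i : Measure X) (μ : Measure X) < η/4 := by
    have := (h.const_mul ((K:ℝ)+1)).eventually (eventually_lt_nhds (show ((K:ℝ)+1) * 0 < η/4 by
      rw [mul_zero]; linarith))
    exact this
  filter_upwards [hev] with i hi
  have b1 := key (ν i : Measure X)
  have b2 := key (μ : Measure X)
  have b3 := hmid i
  rw [Real.dist_eq]
  have : ∫ x, φ x ∂(ν i : Measure X) - ∫ x, φ x ∂(μ : Measure X)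
      = (∫ x, φ x ∂(ν i : Measure X) - ∫ x, ψ x ∂(ν i : Measure X))
      + (∫ x, ψ x ∂(ν i : Measure X) - ∫ x, ψ x ∂(μ : Measure X))
      + (∫ x, ψ x ∂(μ : Measure X) - ∫ x, φ x ∂(μ : Measure X)) := by ring
  rw [this]
  calc |_| ≤ |∫ x, φ x ∂(ν i : Measure X) - ∫ x, ψ x ∂(ν i : Measure X)|
      + |∫ x, ψ x ∂(ν i : Measure X) - ∫ x, ψ x ∂(μ : Measure X)|
      + |∫ x, ψ x ∂(μ : Measure X) - ∫ x, φ x ∂(μ : Measure X)| := abs_add_three _ _ _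
    _ < η := by
        have b2' : |∫ x, ψ x ∂(μ : Measure X) - ∫ x, φ x ∂(μ : Measure X)| ≤ η/4 := by
          rw [abs_sub_comm]; exact b2
        linarith

end sw

section emp
variable {X : Type*} [MetricSpace X] [CompactSpace X] [Nonempty X]
  [MeasurableSpace X] [BorelSpace X]

/-- integral against an empirical measure -/
lemma emp_integral {M : ℕ} (x : Fin (M+1) → X) {φ : X → ℝ} (hφ : Continuous φ) :
    ∫ z, φ z ∂(empMeasure x) = ((M:ℝ)+1)⁻¹ * ∑ i, φ (x i) := by
  rw [empMeasure, integral_smul_measure, integral_finset_sum_measure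
    (fun i _ => integrable_cont hφ _)]
  simp only [integral_dirac]
  rw [smul_eq_mul]
  congr 1
  rw [ENNReal.toReal_inv]
  norm_cast

lemma emp_approx (μ : ProbabilityMeasure X) {ρ : ℝ} (hρ : 0 < ρ) :
    ∃ M₀ : ℕ, ∀ M ≥ M₀, ∃ x : Fin (M+1) → X,
      dKR (empMeasure x) (μ : Measure X) ≤ ρ := by
  classical
  set D : ℝ := Metric.diam (Set.univ : Set X) with hD
  have hD0 : 0 ≤ D := Metric.diam_nonneg
  -- finite net of radius ρ/4
  obtain ⟨t, ht⟩ := isCompact_univ.elim_finite_subcover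
    (fun y : X => Metric.ball y (ρ/4)) (fun y => Metric.isOpen_ball)
    (by intro z _; exact Set.mem_iUnion.2 ⟨z, Metric.mem_ball_self (by linarith)⟩)
  set n := t.card with hn
  have hcovx : ∀ z : X, ∃ y ∈ t, dist z y < ρ/4 := by
    intro z
    have := ht (Set.mem_univ z)
    simp only [Set.mem_iUnion, Metric.mem_ball] at this
    obtain ⟨y, hy, hd⟩ := this
    exact ⟨y, hy, hd⟩
  have hne : t.Nonempty := by
    obtain ⟨z⟩ : Nonempty X := inferInstance
    obtain ⟨y, hy, _⟩ := hcovx z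
    exact ⟨y, hy⟩
  have hn0 : 0 < n := Finset.card_pos.mpr hne
  set p : Fin n → X := fun i => (t.equivFin.symm i : X) with hp
  have hcov : ∀ z : X, ∃ i, dist z (p i) < ρ/4 := by
    intro z
    obtain ⟨y, hy, hd⟩ := hcovx z
    refine ⟨t.equivFin ⟨y, hy⟩, ?_⟩
    simpa [hp, Equiv.symm_apply_apply] using hd
  -- partition
  set A : Fin n → Set X := fun i =>
    {z | dist z (p i) < ρ/4 ∧ ∀ j, j < i → ¬ dist z (p j) < ρ/4} with hA
  have hAmeas : ∀ i, MeasurableSet (A i) := by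
    intro i
    have : A i = Metric.ball (p i) (ρ/4) ∩ ⋂ (j : Fin n), ⋂ (_ : j < i),
        (Metric.ball (p j) (ρ/4))ᶜ := by
      ext z
      simp [hA, Metric.mem_ball, Set.mem_iInter]
    rw [this]
    exact Metric.isOpen_ball.measurableSet.inter (MeasurableSet.iInter fun j =>
      MeasurableSet.iInter fun _ => Metric.isOpen_ball.measurableSet.compl)
  have hAdisj : Pairwise (Function.onFun Disjoint A) := by
    intro i j hij
    rcases lt_or_gt_of_ne hij with h | h
    · refine Set.disjoint_left.2 fun z hzi hzj => ?_
      exact hzj.2 i h hzi.1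
    · refine Set.disjoint_left.2 fun z hzi hzj => ?_
      exact hzi.2 j h hzj.1
  have hAcov : (⋃ i, A i) = Set.univ := by
    ext z
    simp only [Set.mem_iUnion, Set.mem_univ, iff_true]
    have hS : (Finset.univ.filter (fun i => dist z (p i) < ρ/4)).Nonempty := by
      obtain ⟨i, hi⟩ := hcov z
      exact ⟨i, Finset.mem_filter.2 ⟨Finset.mem_univ _, hi⟩⟩
    set i := (Finset.univ.filter (fun i => dist z (p i) < ρ/4)).min' hS with hi
    refine ⟨i, (Finset.mem_filter.1 ((Finset.univ.filter
      (fun i => dist z (p i) < ρ/4)).min'_mem hS)).2, ?_⟩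
    intro j hj hjd
    have : i ≤ j := Finset.min'_le (Finset.univ.filter (fun i => dist z (p i) < ρ/4)) j
      (Finset.mem_filter.2 ⟨Finset.mem_univ _, hjd⟩)
    exact absurd hj (not_lt.2 this)
  have hAball : ∀ i, ∀ z ∈ A i, dist z (p i) < ρ/4 := fun i z hz => hz.1
  -- weights
  set r : Fin n → ℝ := fun i => ((μ : Measure X) (A i)).toReal with hr
  have hrnn : ∀ i, 0 ≤ r i := fun i => ENNReal.toReal_nonneg
  have hrsum : ∑ i, r i = 1 := by
    have h1 : ∑ i, (μ : Measure X) (A i) = 1 := by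
      have hm := measure_iUnion (μ := (μ : Measure X)) hAdisj hAmeas
      rw [hAcov] at hm
      rw [← tsum_fintype (L := SummationFilter.unconditional _) (f := fun i => (μ : Measure X) (A i)), ← hm, measure_univ]
    have := ENNReal.toReal_sum (s := Finset.univ) (f := fun i => (μ : Measure X) (A i))
      (fun a _ => measure_ne_top _ _)
    rw [h1] at this
    simpa [hr] using this.symm
  -- choose M₀
  set M₀ : ℕ := Nat.ceil ((4*(n:ℝ)*(D+1))/ρ) with hM₀
  refine ⟨M₀, ?_⟩
  intro M hM
  have hMlb : 4*(n:ℝ)*(D+1)/ρ ≤ (M:ℝ)+1 := by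
    have h1 : 4*(n:ℝ)*(D+1)/ρ ≤ (M₀:ℝ) := Nat.le_ceil _
    have h2 : (M₀:ℝ) ≤ (M:ℝ) := by exact_mod_cast hM
    linarith
  classical
  set i0 : Fin n := ⟨0, hn0⟩ with hi0
  set T : ℕ := ∑ i ∈ Finset.univ.erase i0, ⌊((M:ℝ)+1) * r i⌋₊ with hTdef
  have hTle : T ≤ M+1 := by
    have h1 : (T:ℝ) ≤ ∑ i ∈ Finset.univ.erase i0, ((M:ℝ)+1) * r i := by
      rw [hTdef]
      push_cast
      exact Finset.sum_le_sum fun i _ => Nat.floor_le (mul_nonneg (by positivity) (hrnn i))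
    have h2 : ∑ i ∈ Finset.univ.erase i0, r i ≤ 1 := by
      rw [← hrsum]
      exact Finset.sum_le_sum_of_subset_of_nonneg (Finset.erase_subset _ _)
        (fun i _ _ => hrnn i)
    have h3 : ∑ i ∈ Finset.univ.erase i0, ((M:ℝ)+1) * r i
        = ((M:ℝ)+1) * ∑ i ∈ Finset.univ.erase i0, r i := by rw [Finset.mul_sum]
    have h4 : (T:ℝ) ≤ (M:ℝ)+1 := by
      rw [h3] at h1
      nlinarith
    exact_mod_cast h4
  set m : Fin n → ℕ := fun i => if i = i0 then (M+1) - T else ⌊((M:ℝ)+1) * r i⌋₊ with hmdef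
  have hmsum : ∑ i, m i = M+1 := by
    rw [← Finset.add_sum_erase _ m (Finset.mem_univ i0)]
    have h1 : ∑ i ∈ Finset.univ.erase i0, m i = T := by
      rw [hTdef]
      refine Finset.sum_congr rfl fun i hi => ?_
      rw [hmdef]
      simp [(Finset.mem_erase.1 hi).1]
    rw [h1, hmdef]
    simp [Nat.sub_add_cancel hTle]
  have herr : ∀ i, i ≠ i0 → |(m i : ℝ) - ((M:ℝ)+1) * r i| ≤ 1 := by
    intro i hi
    have hmi : (m i : ℝ) = (⌊((M:ℝ)+1) * r i⌋₊ : ℝ) := by rw [hmdef]; simp [hi]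
    rw [hmi, abs_le]
    have hnn : 0 ≤ ((M:ℝ)+1) * r i := mul_nonneg (by positivity) (hrnn i)
    constructor
    · have := Nat.lt_floor_add_one (((M:ℝ)+1) * r i)
      linarith
    · have := Nat.floor_le hnn
      linarith
  have herr0 : |(m i0 : ℝ) - ((M:ℝ)+1) * r i0| ≤ (n:ℝ) := by
    have hmi : (m i0 : ℝ) = ((M:ℝ)+1) - (T:ℝ) := by
      rw [hmdef]
      simp only [if_pos rfl]
      push_cast [Nat.cast_sub hTle]
      ring
    have hr0 : r i0 = 1 - ∑ i ∈ Finset.univ.erase i0, r i := by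
      have := Finset.add_sum_erase Finset.univ r (Finset.mem_univ i0)
      rw [hrsum] at this
      linarith
    have hkey : (m i0 : ℝ) - ((M:ℝ)+1) * r i0
        = ∑ i ∈ Finset.univ.erase i0, (((M:ℝ)+1) * r i - (⌊((M:ℝ)+1) * r i⌋₊ : ℝ)) := by
      have hTc : (T:ℝ) = ∑ i ∈ Finset.univ.erase i0, (⌊((M:ℝ)+1) * r i⌋₊ : ℝ) := by
        rw [hTdef]
        push_cast
        rfl
      rw [hmi, hr0, Finset.sum_sub_distrib, ← Finset.mul_sum, hTc]
      ring
    rw [hkey]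
    calc |∑ i ∈ Finset.univ.erase i0, (((M:ℝ)+1) * r i - (⌊((M:ℝ)+1) * r i⌋₊ : ℝ))|
        ≤ ∑ i ∈ Finset.univ.erase i0, |((M:ℝ)+1) * r i - (⌊((M:ℝ)+1) * r i⌋₊ : ℝ)| :=
          Finset.abs_sum_le_sum_abs _ _
      _ ≤ ∑ _i ∈ Finset.univ.erase i0, (1:ℝ) := by
          refine Finset.sum_le_sum fun i _ => ?_
          have hnn : 0 ≤ ((M:ℝ)+1) * r i := mul_nonneg (by positivity) (hrnn i)
          rw [abs_le]
          constructor
          · have := Nat.floor_le hnn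
            linarith
          · have := Nat.lt_floor_add_one (((M:ℝ)+1) * r i)
            linarith
      _ ≤ (n:ℝ) := by
          rw [Finset.sum_const, nsmul_eq_mul, mul_one]
          have : (Finset.univ.erase i0).card ≤ n := by
            have := Finset.card_erase_le (s := (Finset.univ : Finset (Fin n))) (a := i0)
            simpa using this
          exact_mod_cast this
  have herrsum : ∑ i, |(m i:ℝ) - ((M:ℝ)+1) * r i| ≤ 2*(n:ℝ) := by
    rw [← Finset.add_sum_erase _ _ (Finset.mem_univ i0)]
    have h1 : ∑ i ∈ Finset.univ.erase i0, |(m i:ℝ) - ((M:ℝ)+1) * r i|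
        ≤ ∑ _i ∈ Finset.univ.erase i0, (1:ℝ) :=
      Finset.sum_le_sum fun i hi => herr i (Finset.mem_erase.1 hi).1
    have h2 : ∑ _i ∈ Finset.univ.erase i0, (1:ℝ) ≤ (n:ℝ) := by
      rw [Finset.sum_const, nsmul_eq_mul, mul_one]
      have := Finset.card_erase_le (s := (Finset.univ : Finset (Fin n))) (a := i0)
      exact_mod_cast by simpa using this
    linarith [herr0]
  -- the tuple
  have hcard : Fintype.card ((i : Fin n) × Fin (m i)) = M+1 := by
    simp [Fintype.card_sigma, hmsum]
  set E := Fintype.equivFinOfCardEq hcard with hE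
  set x : Fin (M+1) → X := fun tt => p (E.symm tt).1 with hx
  refine ⟨x, ?_⟩
  have hsumg : ∀ g : X → ℝ, ∑ tt, g (x tt) = ∑ i, (m i : ℝ) * g (p i) := by
    intro g
    rw [← Equiv.sum_comp E (fun tt => g (x tt))]
    have he : ∀ σ : (i : Fin n) × Fin (m i), g (x (E σ)) = g (p σ.1) := by
      intro σ
      rw [hx]
      simp
    rw [Finset.sum_congr rfl (fun σ _ => he σ), ← Finset.univ_sigma_univ, Finset.sum_sigma]
    simp [Finset.sum_const, nsmul_eq_mul]
  -- final estimate
  refine dKR_le fun φ hφ => ?_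
  haveI : IsProbabilityMeasure (empMeasure x) := empMeasure_prob x
  set c : ℝ := φ (p i0) with hc
  set ψ : X → ℝ := fun z => φ z - c with hψdef
  have hψ : LipschitzWith 1 ψ := by
    refine LipschitzWith.of_dist_le_mul fun a b => ?_
    rw [Real.dist_eq]
    have := hφ.dist_le_mul a b
    rw [Real.dist_eq] at this
    simpa [hψdef] using this
  have hψc : Continuous ψ := hψ.continuous
  have hψb : ∀ z, |ψ z| ≤ D := fun z => lip_abs_bound hφ (p i0) z
  have hconst : ∀ (κ : Measure X) [IsProbabilityMeasure κ],
      ∫ z, ψ z ∂κ = ∫ z, φ z ∂κ - c := by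
    intro κ hκ
    rw [hψdef]
    rw [integral_sub (integrable_cont hφ.continuous κ) (integrable_const c), integral_const]
    simp
  have hdiff : ∫ z, φ z ∂(empMeasure x) - ∫ z, φ z ∂(μ : Measure X)
      = ∫ z, ψ z ∂(empMeasure x) - ∫ z, ψ z ∂(μ : Measure X) := by
    rw [hconst (empMeasure x), hconst (μ : Measure X)]
    ring
  have hempint : ∫ z, ψ z ∂(empMeasure x) = ((M:ℝ)+1)⁻¹ * ∑ i, (m i : ℝ) * ψ (p i) := by
    rw [emp_integral x hψc, hsumg ψ]
  have hsplit : ∫ z, ψ z ∂(μ : Measure X) = ∑ i, ∫ z in A i, ψ z ∂(μ : Measure X) := by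
    rw [← integral_iUnion_fintype hAmeas hAdisj
      (fun i => (integrable_cont hψc (μ : Measure X)).integrableOn), hAcov,
      Measure.restrict_univ]
  set S1 : ℝ := ∑ i, ((m i : ℝ)/((M:ℝ)+1) - r i) * ψ (p i) with hS1
  set S2 : ℝ := ∑ i, (r i * ψ (p i) - ∫ z in A i, ψ z ∂(μ : Measure X)) with hS2
  have hcomb : ∫ z, ψ z ∂(empMeasure x) - ∫ z, ψ z ∂(μ : Measure X) = S1 + S2 := by
    rw [hempint, hsplit, hS1, hS2, Finset.mul_sum, ← Finset.sum_sub_distrib,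
      ← Finset.sum_add_distrib]
    refine Finset.sum_congr rfl fun i _ => ?_
    have hM1 : ((M:ℝ)+1) ≠ 0 := by positivity
    field_simp
    ring
  have hS1bound : |S1| ≤ ρ/2 := by
    have h1 : |S1| ≤ ∑ i, |(m i : ℝ)/((M:ℝ)+1) - r i| * D := by
      refine (Finset.abs_sum_le_sum_abs _ _).trans (Finset.sum_le_sum fun i _ => ?_)
      rw [abs_mul]
      exact mul_le_mul_of_nonneg_left (hψb (p i)) (abs_nonneg _)
    have h2 : ∑ i, |(m i : ℝ)/((M:ℝ)+1) - r i| * D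
        = (D/((M:ℝ)+1)) * ∑ i, |(m i:ℝ) - ((M:ℝ)+1) * r i| := by
      rw [Finset.mul_sum]
      refine Finset.sum_congr rfl fun i _ => ?_
      have hM1 : (0:ℝ) < (M:ℝ)+1 := by positivity
      have he : (m i : ℝ)/((M:ℝ)+1) - r i = ((m i:ℝ) - ((M:ℝ)+1) * r i)/((M:ℝ)+1) := by
        field_simp
      rw [he, abs_div, abs_of_pos hM1]
      ring
    have h3 : (D/((M:ℝ)+1)) * ∑ i, |(m i:ℝ) - ((M:ℝ)+1) * r i|
        ≤ (D/((M:ℝ)+1)) * (2*(n:ℝ)) :=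
      mul_le_mul_of_nonneg_left herrsum (by positivity)
    have h4 : (D/((M:ℝ)+1)) * (2*(n:ℝ)) ≤ ρ/2 := by
      rw [div_mul_eq_mul_div, div_le_iff₀ (by positivity : (0:ℝ) < (M:ℝ)+1)]
      have hn1 : (1:ℝ) ≤ (n:ℝ) := by exact_mod_cast hn0
      have h5 : 4*(n:ℝ)*(D+1) ≤ ρ * ((M:ℝ)+1) := by
        have := (div_le_iff₀ hρ).1 hMlb
        linarith [this]
      nlinarith
    calc |S1| ≤ ∑ i, |(m i : ℝ)/((M:ℝ)+1) - r i| * D := h1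
      _ = (D/((M:ℝ)+1)) * ∑ i, |(m i:ℝ) - ((M:ℝ)+1) * r i| := h2
      _ ≤ (D/((M:ℝ)+1)) * (2*(n:ℝ)) := h3
      _ ≤ ρ/2 := h4
  have hS2bound : |S2| ≤ ρ/4 := by
    have h1 : ∀ i, |r i * ψ (p i) - ∫ z in A i, ψ z ∂(μ:Measure X)| ≤ (ρ/4) * r i := by
      intro i
      have hconstint : ∫ _z in A i, (ψ (p i)) ∂(μ:Measure X) = r i * ψ (p i) := by
        rw [setIntegral_const, hr]
        simp [smul_eq_mul]
        left; rfl
      have hsub : r i * ψ (p i) - ∫ z in A i, ψ z ∂(μ:Measure X)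
          = ∫ z in A i, (ψ (p i) - ψ z) ∂(μ:Measure X) := by
        rw [integral_sub (integrable_const _)
          ((integrable_cont hψc (μ:Measure X)).integrableOn), hconstint]
      rw [hsub]
      have hb : ∀ z ∈ A i, ‖ψ (p i) - ψ z‖ ≤ ρ/4 := by
        intro z hz
        rw [Real.norm_eq_abs]
        have h5 := hψ.dist_le_mul (p i) z
        rw [Real.dist_eq] at h5
        have h6 : dist (p i) z < ρ/4 := by
          rw [dist_comm]
          exact hAball i z hz
        have := h5.trans (by simpa using h6.le)
        simpa using this
      have := norm_setIntegral_le_of_norm_le_const (μ := (μ:Measure X)) (s := A i)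
        (f := fun z => ψ (p i) - ψ z) (measure_lt_top _ _) hb
      rw [Real.norm_eq_abs] at this
      refine this.trans ?_
      exact le_of_eq rfl
    have h2 : |S2| ≤ ∑ i, (ρ/4) * r i := by
      refine (Finset.abs_sum_le_sum_abs _ _).trans (Finset.sum_le_sum fun i _ => h1 i)
    have h3 : ∑ i, (ρ/4) * r i = ρ/4 := by
      rw [← Finset.mul_sum, hrsum, mul_one]
    linarith
  have hfinal : ∫ z, φ z ∂(empMeasure x) - ∫ z, φ z ∂(μ:Measure X) ≤ ρ/2 + ρ/4 := by
    rw [hdiff, hcomb]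
    have hle := le_abs_self (S1 + S2)
    have := abs_add_le S1 S2
    linarith
  linarith


end emp

section ax
variable {X : Type*} [MetricSpace X] [CompactSpace X] [Nonempty X]
  [MeasurableSpace X] [BorelSpace X]

/-- selection of empirical approximations -/
lemma emp_select (μ : ProbabilityMeasure X) :
    ∃ s : ∀ M : ℕ, Fin (M+1) → X,
      Tendsto (fun M => dKR (empMeasure (s M)) (μ : Measure X)) atTop (𝓝 0) := by
  classical
  have hne : ∀ M : ℕ, (Set.range fun x : Fin (M+1) → X =>
      dKR (empMeasure x) (μ : Measure X)).Nonempty := by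
    intro M
    obtain ⟨z⟩ : Nonempty X := inferInstance
    exact ⟨_, ⟨fun _ => z, rfl⟩⟩
  have hnn : ∀ (M : ℕ) (x : Fin (M+1) → X), 0 ≤ dKR (empMeasure x) (μ : Measure X) := by
    intro M x
    haveI := empMeasure_prob x
    exact dKR_nonneg _ _
  set e : ℕ → ℝ := fun M => sInf (Set.range fun x : Fin (M+1) → X =>
    dKR (empMeasure x) (μ : Measure X)) with he
  have hbdd : ∀ M, BddBelow (Set.range fun x : Fin (M+1) → X =>
      dKR (empMeasure x) (μ : Measure X)) := by
    intro M
    exact ⟨0, by rintro r ⟨x, rfl⟩; exact hnn M x⟩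
  have hsel : ∀ M : ℕ, ∃ x : Fin (M+1) → X,
      dKR (empMeasure x) (μ : Measure X) < e M + 1/((M:ℝ)+1) := by
    intro M
    have hpos : (0:ℝ) < 1/((M:ℝ)+1) := by positivity
    obtain ⟨a, ⟨x, rfl⟩, ha⟩ := Real.lt_sInf_add_pos (hne M) hpos
    exact ⟨x, ha⟩
  choose s hs using hsel
  refine ⟨s, ?_⟩
  have henn : ∀ M, 0 ≤ e M := fun M =>
    le_csInf (hne M) (by rintro r ⟨x, rfl⟩; exact hnn M x)
  have hetend : Tendsto e atTop (𝓝 0) := by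
    rw [Metric.tendsto_atTop]
    intro ρ hρ
    obtain ⟨M₀, hM₀⟩ := emp_approx μ (show (0:ℝ) < ρ/2 by linarith)
    refine ⟨M₀, fun M hM => ?_⟩
    obtain ⟨x, hx⟩ := hM₀ M hM
    have : e M ≤ ρ/2 := csInf_le (hbdd M) ⟨x, rfl⟩ |>.trans hx |>.trans (le_refl _)
    rw [Real.dist_eq, sub_zero, abs_of_nonneg (henn M)]
    linarith
  have hone : Tendsto (fun M : ℕ => 1/((M:ℝ)+1)) atTop (𝓝 0) :=
    tendsto_one_div_add_atTop_nhds_zero_nat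
  have hsum : Tendsto (fun M => e M + 1/((M:ℝ)+1)) atTop (𝓝 0) := by
    have := hetend.add hone
    simpa using this
  exact squeeze_zero (fun M => hnn M (s M)) (fun M => (hs M).le) hsum
end ax


/-- Approximation power of the mean field limit kernel. If a continuous
`f : P(X) → ℝ` is such that for every `ε > 0` there are `B ≥ 0` and sequences `f_M`
(symmetric, continuous w.r.t. the pseudometric `(x,x') ↦ d_KR(μ̂[x],μ̂[x'])`) and
`f̂_M ∈ H_{k_M}` with `f_M → f` in mean field, `‖f_M − f̂_M‖_∞ ≤ ε` and `‖f̂_M‖ ≤ B`,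
then for every `ε > 0` there is `f̂ ∈ H_k` (represented by `g`) with `‖f − f̂‖_∞ ≤ ε`. -/
theorem mean_field_kernel_approximation
    {X : Type*} [MetricSpace X] [CompactSpace X] [Nonempty X]
    [MeasurableSpace X] [BorelSpace X]
    {HM : ℕ → Type*} [∀ M, NormedAddCommGroup (HM M)] [∀ M, InnerProductSpace ℝ (HM M)]
    [∀ M, CompleteSpace (HM M)]
    (ΦM : ∀ M : ℕ, (Fin (M + 1) → X) → HM M)
    (kM : ∀ M : ℕ, (Fin (M + 1) → X) → (Fin (M + 1) → X) → ℝ)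
    (hkM : ∀ M x x', kM M x x' = ⟪ΦM M x, ΦM M x'⟫)
    (hsymM : ∀ M (σ : Equiv.Perm (Fin (M + 1))) (x x' : Fin (M + 1) → X),
      kM M (x ∘ σ) x' = kM M x x')
    {Hk : Type*} [NormedAddCommGroup Hk] [InnerProductSpace ℝ Hk] [CompleteSpace Hk]
    (Φ : ProbabilityMeasure X → Hk)
    (k : ProbabilityMeasure X → ProbabilityMeasure X → ℝ)
    (hkk : ∀ μ ν, k μ ν = ⟪Φ μ, Φ ν⟫)
    (hdense : Dense (Submodule.span ℝ (Set.range Φ) : Set Hk))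
    (C_k L_k : ℝ)
    (hbdM : ∀ M x x', |kM M x x'| ≤ C_k)
    (hbdk : ∀ μ ν, |k μ ν| ≤ C_k)
    (hLipM : ∀ M (x₁ x₁' x₂ x₂' : Fin (M + 1) → X),
      |kM M x₁ x₁' - kM M x₂ x₂'| ≤
        L_k * (dKR (empMeasure x₁) (empMeasure x₂) + dKR (empMeasure x₁') (empMeasure x₂')))
    (hLipk : ∀ μ₁ μ₁' μ₂ μ₂' : ProbabilityMeasure X,
      |k μ₁ μ₁' - k μ₂ μ₂'| ≤
        L_k * (dKR (μ₁ : Measure X) (μ₂ : Measure X) + dKR (μ₁' : Measure X) (μ₂' : Measure X)))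
    (hMF : ∀ ε : ℝ, 0 < ε → ∃ M₀ : ℕ, ∀ M ≥ M₀, ∀ x x' : Fin (M + 1) → X,
      |kM M x x' - k (empProb x) (empProb x')| ≤ ε)
    (f : ProbabilityMeasure X → ℝ) (hf : Continuous f)
    (happrox : ∀ ε : ℝ, 0 < ε → ∃ B : ℝ, 0 ≤ B ∧
      ∃ (fM : ∀ M : ℕ, (Fin (M + 1) → X) → ℝ) (fhat : ∀ M : ℕ, HM M),
        (∀ M (σ : Equiv.Perm (Fin (M + 1))) (x : Fin (M + 1) → X), fM M (x ∘ σ) = fM M x) ∧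
        (∀ M (x : Fin (M + 1) → X), ∀ δ : ℝ, 0 < δ → ∃ ρ : ℝ, 0 < ρ ∧
          ∀ x' : Fin (M + 1) → X,
            dKR (empMeasure x') (empMeasure x) < ρ → |fM M x' - fM M x| < δ) ∧
        (∀ δ : ℝ, 0 < δ → ∃ M₀ : ℕ, ∀ M ≥ M₀, ∀ x : Fin (M + 1) → X,
          |fM M x - f (empProb x)| ≤ δ) ∧
        (∀ M (x : Fin (M + 1) → X), |fM M x - ⟪fhat M, ΦM M x⟫| ≤ ε) ∧
        (∀ M, ‖fhat M‖ ≤ B)) :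
    ∀ ε : ℝ, 0 < ε → ∃ g : Hk, ∀ μ : ProbabilityMeasure X, |f μ - ⟪g, Φ μ⟫| ≤ ε := by
  classical
  intro ε hε
  obtain ⟨B, hB, fM, fhat, -, -, hMFf, hfit, hnorm⟩ := happrox ε hε
  -- selection of empirical approximations
  have hselect := fun μ : ProbabilityMeasure X => emp_select μ
  choose s hs using hselect
  -- norm of features
  have hnormPhiM : ∀ M (x : Fin (M+1) → X), ‖ΦM M x‖ ≤ Real.sqrt C_k := by
    intro M x
    have h1 : ‖ΦM M x‖ ^ 2 = kM M x x := by
      rw [hkM]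
      rw [real_inner_self_eq_norm_sq]
    have h2 : kM M x x ≤ C_k := (le_abs_self _).trans (hbdM M x x)
    have := Real.sqrt_le_sqrt (h1 ▸ h2 : ‖ΦM M x‖ ^ 2 ≤ C_k)
    rwa [Real.sqrt_sq (norm_nonneg _)] at this
  -- the discrete evaluations
  set hh : ℕ → ProbabilityMeasure X → ℝ := fun M μ => ⟪fhat M, ΦM M (s μ M)⟫ with hhdef
  have hhbound : ∀ M μ, |hh M μ| ≤ B * Real.sqrt C_k := by
    intro M μ
    calc |hh M μ| ≤ ‖fhat M‖ * ‖ΦM M (s μ M)‖ := abs_real_inner_le_norm _ _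
      _ ≤ B * Real.sqrt C_k :=
        mul_le_mul (hnorm M) (hnormPhiM M _) (norm_nonneg _) hB
  -- ultrafilter
  set U : Ultrafilter ℕ := Filter.hyperfilter ℕ with hU
  have hUat : (U : Filter ℕ) ≤ atTop := Nat.hyperfilter_le_atTop
  -- limits along U
  have hlimex : ∀ μ, ∃ l : ℝ, Tendsto (fun M => hh M μ) (U : Filter ℕ) (𝓝 l) := by
    intro μ
    set R := B * Real.sqrt C_k
    have hmem : ∀ M, hh M μ ∈ Set.Icc (-R) R := by
      intro M
      have := hhbound M μ
      rw [abs_le] at this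
      exact ⟨this.1, this.2⟩
    have hle : (Ultrafilter.map (fun M => hh M μ) U : Filter ℝ) ≤ 𝓟 (Set.Icc (-R) R) := by
      rw [Ultrafilter.coe_map, Filter.le_principal_iff, Filter.mem_map]
      exact Filter.Eventually.of_forall hmem
    obtain ⟨a, -, ha⟩ := isCompact_Icc.ultrafilter_le_nhds (Ultrafilter.map _ U) hle
    exact ⟨a, by rwa [Ultrafilter.coe_map] at ha⟩
  choose hfun hfuntend using hlimex
  -- Part A : |f μ - hfun μ| ≤ ε
  have hA : ∀ μ, |f μ - hfun μ| ≤ ε := by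
    intro μ
    refine le_of_forall_pos_le_add ?_
    intro δ hδ
    obtain ⟨M₁, hM₁⟩ := hMFf δ hδ
    have hweak : Tendsto (fun M => empProb (s μ M)) atTop (𝓝 μ) :=
      tendsto_of_dKR _ _ (hs μ)
    have hftend : Tendsto (fun M => f (empProb (s μ M))) atTop (𝓝 (f μ)) :=
      (hf.tendsto μ).comp hweak
    have h1 : ∀ᶠ M in (U : Filter ℕ), |hh M μ - f (empProb (s μ M))| ≤ ε + δ := by
      filter_upwards [hUat (eventually_ge_atTop M₁)] with M hM
      have ha := hfit M (s μ M)
      have hb := hM₁ M hM (s μ M)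
      calc |hh M μ - f (empProb (s μ M))|
          ≤ |hh M μ - fM M (s μ M)| + |fM M (s μ M) - f (empProb (s μ M))| :=
            abs_sub_le _ _ _
        _ ≤ ε + δ := add_le_add (by rw [abs_sub_comm]; exact ha) hb
    have h2 : Tendsto (fun M => hh M μ - f (empProb (s μ M))) (U : Filter ℕ)
        (𝓝 (hfun μ - f μ)) :=
      (hfuntend μ).sub (hftend.mono_left hUat)
    have h3 : |hfun μ - f μ| ≤ ε + δ := le_of_tendsto h2.abs h1
    rw [abs_sub_comm] at h3
    exact h3
  -- Part B : kernel convergence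
  have hkconv : ∀ μ ν : ProbabilityMeasure X,
      Tendsto (fun M => kM M (s μ M) (s ν M)) atTop (𝓝 (k μ ν)) := by
    intro μ ν
    have hsμ : Tendsto (fun M => dKR (empProb (s μ M) : Measure X) (μ : Measure X))
        atTop (𝓝 0) := hs μ
    have hsν : Tendsto (fun M => dKR (empProb (s ν M) : Measure X) (ν : Measure X))
        atTop (𝓝 0) := hs ν
    have h1 : Tendsto (fun M => k (empProb (s μ M)) (empProb (s ν M)) - k μ ν) atTop (𝓝 0) := by
      refine squeeze_zero_norm (a := fun M => L_k * (dKR (empProb (s μ M) : Measure X)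
        (μ : Measure X) + dKR (empProb (s ν M) : Measure X) (ν : Measure X)))
        (fun M => ?_) ?_
      · rw [Real.norm_eq_abs]
        exact hLipk (empProb (s μ M)) (empProb (s ν M)) μ ν
      · have := (hsμ.add hsν).const_mul L_k
        simpa using this
    have h2 : Tendsto (fun M => kM M (s μ M) (s ν M)
        - k (empProb (s μ M)) (empProb (s ν M))) atTop (𝓝 0) := by
      rw [Metric.tendsto_atTop]
      intro ρ hρ
      obtain ⟨M₀, hM₀⟩ := hMF (ρ/2) (by linarith)
      refine ⟨M₀, fun M hM => ?_⟩
      rw [Real.dist_eq, sub_zero]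
      exact lt_of_le_of_lt (hM₀ M hM _ _) (by linarith)
    have h3 : Tendsto (fun M => kM M (s μ M) (s ν M) - k μ ν) atTop (𝓝 0) := by
      have heq : (fun M => (kM M (s μ M) (s ν M) - k (empProb (s μ M)) (empProb (s ν M)))
          + (k (empProb (s μ M)) (empProb (s ν M)) - k μ ν))
          = fun M => kM M (s μ M) (s ν M) - k μ ν := by
        funext M; ring
      have h4 := h2.add h1
      rw [heq] at h4
      simpa using h4
    exact tendsto_sub_nhds_zero_iff.mp h3
  -- the linear functionals
  set Ψ : (ProbabilityMeasure X →₀ ℝ) →ₗ[ℝ] Hk := Finsupp.linearCombination ℝ Φ with hΨ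
  set L : (ProbabilityMeasure X →₀ ℝ) →ₗ[ℝ] ℝ := Finsupp.linearCombination ℝ hfun with hL
  have hkey : ∀ c : ProbabilityMeasure X →₀ ℝ, |L c| ≤ B * ‖Ψ c‖ := by
    intro c
    set v : ∀ M : ℕ, HM M := fun M => ∑ μ ∈ c.support, c μ • ΦM M (s μ M) with hv
    have hav : ∀ M, ⟪fhat M, v M⟫ = ∑ μ ∈ c.support, c μ * hh M μ := by
      intro M
      rw [hv, inner_sum]
      exact Finset.sum_congr rfl fun μ _ => real_inner_smul_right _ _ _
    have habs : ∀ M, |∑ μ ∈ c.support, c μ * hh M μ| ≤ B * ‖v M‖ := by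
      intro M
      rw [← hav M]
      calc |⟪fhat M, v M⟫| ≤ ‖fhat M‖ * ‖v M‖ := abs_real_inner_le_norm _ _
        _ ≤ B * ‖v M‖ := mul_le_mul_of_nonneg_right (hnorm M) (norm_nonneg _)
    have hQ : ∀ M, ⟪v M, v M⟫ = ∑ ν ∈ c.support, ∑ μ ∈ c.support,
        c μ * c ν * kM M (s μ M) (s ν M) := by
      intro M
      rw [hv, inner_sum]
      refine Finset.sum_congr rfl fun ν _ => ?_
      rw [real_inner_smul_right, sum_inner, Finset.mul_sum]
      refine Finset.sum_congr rfl fun μ _ => ?_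
      rw [real_inner_smul_left, ← hkM]
      ring
    have hPsiQ : ⟪Ψ c, Ψ c⟫ = ∑ ν ∈ c.support, ∑ μ ∈ c.support, c μ * c ν * k μ ν := by
      rw [hΨ, Finsupp.linearCombination_apply, Finsupp.sum, inner_sum]
      refine Finset.sum_congr rfl fun ν _ => ?_
      rw [real_inner_smul_right, sum_inner, Finset.mul_sum]
      refine Finset.sum_congr rfl fun μ _ => ?_
      rw [real_inner_smul_left, ← hkk]
      ring
    have hQtend : Tendsto (fun M => ⟪v M, v M⟫) atTop (𝓝 ⟪Ψ c, Ψ c⟫) := by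
      rw [hPsiQ, funext hQ]
      refine tendsto_finset_sum _ fun ν _ => tendsto_finset_sum _ fun μ _ => ?_
      exact (hkconv μ ν).const_mul _
    have hnormtend : Tendsto (fun M => ‖v M‖) atTop (𝓝 ‖Ψ c‖) := by
      have h1 : ∀ M, ‖v M‖ = Real.sqrt ⟪v M, v M⟫ := by
        intro M
        rw [real_inner_self_eq_norm_sq, Real.sqrt_sq (norm_nonneg _)]
      have h2 : ‖Ψ c‖ = Real.sqrt ⟪Ψ c, Ψ c⟫ := by
        rw [real_inner_self_eq_norm_sq, Real.sqrt_sq (norm_nonneg _)]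
      rw [funext h1, h2]
      exact (Real.continuous_sqrt.tendsto _).comp hQtend
    have hLc : L c = ∑ μ ∈ c.support, c μ * hfun μ := by
      rw [hL, Finsupp.linearCombination_apply, Finsupp.sum]
      simp [smul_eq_mul]
    have hLtend : Tendsto (fun M => ∑ μ ∈ c.support, c μ * hh M μ) (U : Filter ℕ)
        (𝓝 (L c)) := by
      rw [hLc]
      exact tendsto_finset_sum _ fun μ _ => ((hfuntend μ).const_mul _)
    exact le_of_tendsto_of_tendsto' hLtend.abs
      ((tendsto_const_nhds.mul hnormtend).mono_left hUat) habs
  -- build the functional on Hk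
  have hker : LinearMap.ker Ψ ≤ LinearMap.ker L := by
    intro c hc
    rw [LinearMap.mem_ker] at hc ⊢
    have := hkey c
    rw [hc, norm_zero, mul_zero] at this
    exact abs_eq_zero.mp (le_antisymm this (abs_nonneg _))
  set p : Submodule ℝ Hk := LinearMap.range Ψ with hp
  set Lq : ((ProbabilityMeasure X →₀ ℝ) ⧸ LinearMap.ker Ψ) →ₗ[ℝ] ℝ :=
    (LinearMap.ker Ψ).liftQ L hker with hLq
  set L2 : p →ₗ[ℝ] ℝ := Lq.comp (LinearMap.quotKerEquivRange Ψ).symm.toLinearMap with hL2def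
  have hL2 : ∀ c : ProbabilityMeasure X →₀ ℝ,
      L2 ⟨Ψ c, LinearMap.mem_range_self Ψ c⟩ = L c := by
    intro c
    have h1 : (LinearMap.quotKerEquivRange Ψ) (Submodule.Quotient.mk c)
        = ⟨Ψ c, LinearMap.mem_range_self Ψ c⟩ := Subtype.ext (LinearMap.quotKerEquivRange_apply_mk Ψ c)
    have h2 : (LinearMap.quotKerEquivRange Ψ).symm ⟨Ψ c, LinearMap.mem_range_self Ψ c⟩
        = Submodule.Quotient.mk c := by
      rw [← h1, LinearEquiv.symm_apply_apply]
    rw [hL2def]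
    simp only [LinearMap.comp_apply, LinearEquiv.coe_toLinearMap]
    rw [h2, hLq, Submodule.liftQ_apply]
  have hL2b : ∀ w : p, ‖L2 w‖ ≤ B * ‖w‖ := by
    rintro ⟨w, hw⟩
    obtain ⟨c, rfl⟩ := hw
    rw [show (⟨Ψ c, ⟨c, rfl⟩⟩ : p) = ⟨Ψ c, LinearMap.mem_range_self Ψ c⟩ from rfl, hL2 c,
      Real.norm_eq_abs]
    exact hkey c
  set L3 : p →L[ℝ] ℝ := L2.mkContinuous B hL2b with hL3
  have hpspan : p = Submodule.span ℝ (Set.range Φ) := by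
    rw [hp, hΨ, Finsupp.range_linearCombination]
  have hdr : DenseRange (⇑p.subtypeL) := by
    have h1 : Set.range (⇑p.subtypeL) = (p : Set Hk) := Subtype.range_coe
    rw [DenseRange, h1, hpspan]
    exact hdense
  have hui : IsUniformInducing (⇑p.subtypeL) :=
    isUniformEmbedding_subtype_val.isUniformInducing
  set L4 : Hk →L[ℝ] ℝ := L3.extend p.subtypeL with hL4
  set g : Hk := (InnerProductSpace.toDual ℝ Hk).symm L4 with hg
  refine ⟨g, fun μ => ?_⟩
  have hgΦ : ⟪g, Φ μ⟫ = hfun μ := by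
    rw [hg, InnerProductSpace.toDual_symm_apply]
    have hmem : Φ μ ∈ p := by
      refine ⟨Finsupp.single μ 1, ?_⟩
      rw [hΨ, Finsupp.linearCombination_single, one_smul]
    have h5 : L4 (Φ μ) = L3 ⟨Φ μ, hmem⟩ := by
      have := ContinuousLinearMap.extend_eq (f := L3) (e := p.subtypeL) hdr hui ⟨Φ μ, hmem⟩
      simpa using this
    rw [h5]
    have h6 : L3 ⟨Φ μ, hmem⟩ = L2 ⟨Φ μ, hmem⟩ := rfl
    rw [h6]
    have h7 : (⟨Φ μ, hmem⟩ : p) = ⟨Ψ (Finsupp.single μ 1),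
        LinearMap.mem_range_self Ψ _⟩ := by
      apply Subtype.ext
      simp only []
      rw [hΨ, Finsupp.linearCombination_single, one_smul]
    rw [h7, hL2 (Finsupp.single μ 1), hL, Finsupp.linearCombination_single, one_smul]
  rw [hgΦ]
  exact hA μ
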